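/- Let a, b ∈ W_P be words such that [b]_m ≠ 0 for some m, and let s(b) be the signature of b, i.e. the largest n with [b]_n = 0. Then for every n ≥ 0: [a·b]_n = 0 if and only if [a·t]_n = 0, where t ∈ W_P is the word representing the positive integer 2^{s(b)}. Consequently s(a·b) = s(a·t). -/

import Mathlib

/-- Words built from a single generator `1` using two binary operations `·` and `∘`. -/
inductive WP : Type
  | one : WP
  | mul : WP → WP → WP
  | comp : WP → WP → WP

/-- Laver's laws (ALΣ) for two binary operations `mul` (`·`) and `comp` (`∘`). -/
def ALSigma {α : Type*} (mul comp : α → α → α) : Prop :=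
  (∀ a b c : α, comp a (comp b c) = comp (comp a b) c) ∧
  (∀ a b c : α, mul (comp a b) c = mul a (mul b c)) ∧
  (∀ a b c : α, mul a (comp b c) = comp (mul a b) (mul a c)) ∧
  (∀ a b : α, comp a b = comp (mul a b) a)

/-- `[a]_n`: the evaluation of a word `a ∈ W_P` in `P_n = ℤ/2^nℤ`, interpreting
the generator as `1`, `·` as `*_n` (`op n`) and `∘` as `∘_n` (`cmp n`). -/
def evalP (op cmp : ∀ n : ℕ, ZMod (2 ^ n) → ZMod (2 ^ n) → ZMod (2 ^ n))
    (n : ℕ) : WP → ZMod (2 ^ n)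
  | WP.one => 1
  | WP.mul a b => op n (evalP op cmp n a) (evalP op cmp n b)
  | WP.comp a b => cmp n (evalP op cmp n a) (evalP op cmp n b)

/-- The word representing the positive integer `k` (for `k ≥ 1`): the integer `1`
is the generator, and the integer `k+1` is the word `k·1`. -/
def posWord : ℕ → WP
  | 0 => WP.one
  | 1 => WP.one
  | (k + 2) => WP.mul (posWord (k + 1)) WP.one

/-- `s` is the signature of the word `b`: the largest `n` with `[b]_n = 0`. -/
def IsSig (op cmp : ∀ n : ℕ, ZMod (2 ^ n) → ZMod (2 ^ n) → ZMod (2 ^ n))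
    (b : WP) (s : ℕ) : Prop :=
  evalP op cmp s b = 0 ∧ ∀ m : ℕ, evalP op cmp m b = 0 → m ≤ s


set_option linter.unusedSectionVars false
set_option linter.unusedVariables false

section Laver

instance instNeZeroPow {n : ℕ} : NeZero (2 ^ n) := ⟨(Nat.two_pow_pos n).ne'⟩

variable {n : ℕ} {op : ZMod (2 ^ n) → ZMod (2 ^ n) → ZMod (2 ^ n)}
variable {cmp : ZMod (2 ^ n) → ZMod (2 ^ n) → ZMod (2 ^ n)}

/-- every element is a positive nat cast -/
lemma lav_exists_rep (b : ZMod (2 ^ n)) : ∃ k : ℕ, b = ((k + 1 : ℕ) : ZMod (2 ^ n)) := by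
  rcases eq_or_ne b 0 with rfl | hb
  · refine ⟨2 ^ n - 1, ?_⟩
    have h1 : 1 ≤ 2 ^ n := Nat.one_le_two_pow
    rw [Nat.sub_add_cancel h1]
    simp
  · refine ⟨b.val - 1, ?_⟩
    have hv : 1 ≤ b.val := by
      rcases Nat.eq_zero_or_pos b.val with h | h
      · exact absurd (by rw [← ZMod.natCast_rightInverse b, h]; simp) hb
      · exact h
    rw [Nat.sub_add_cancel hv, ZMod.natCast_rightInverse b]

section ops
variable (h2 : ∀ a b c, op (cmp a b) c = op a (op b c))
variable (h4 : ∀ a b, cmp a b = cmp (op a b) a)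
variable (hs : ∀ a, op a 1 = a + 1)

include h2 hs in
lemma lav_cmp_eq (a b : ZMod (2 ^ n)) : cmp a b = op a (b + 1) - 1 := by
  have h := h2 a b 1
  rw [hs, hs] at h
  exact eq_sub_of_add_eq h

include h2 h4 hs in
lemma lav_rec (a b : ZMod (2 ^ n)) : op a (b + 1) = op (op a b) (a + 1) := by
  have h := h4 a b
  rw [lav_cmp_eq h2 hs, lav_cmp_eq h2 hs] at h
  exact sub_left_injective h

include h2 h4 in
lemma lav_ld (a b c : ZMod (2 ^ n)) : op a (op b c) = op (op a b) (op a c) := by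
  rw [← h2 a b c, h4 a b, h2 (op a b) a c]

include h2 h4 hs in
lemma lav_zero_mul (x : ZMod (2 ^ n)) : op 0 x = x := by
  have key : ∀ k : ℕ, op 0 ((k + 1 : ℕ) : ZMod (2 ^ n)) = ((k + 1 : ℕ) : ZMod (2 ^ n)) := by
    intro k
    induction k with
    | zero => simpa using hs 0
    | succ k ih =>
        have : ((k + 1 + 1 : ℕ) : ZMod (2 ^ n)) = ((k + 1 : ℕ) : ZMod (2 ^ n)) + 1 := by
          push_cast; ring
        rw [this, lav_rec h2 h4 hs, ih, zero_add, hs]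
  obtain ⟨k, rfl⟩ := lav_exists_rep x
  exact key k

include h2 h4 hs in
lemma lav_gt (a b : ZMod (2 ^ n)) : op a b = 0 ∨ a.val < (op a b).val := by
  -- first handle b = cast (k+1) with induction on the "distance to the top" of a
  have main : ∀ d : ℕ, ∀ a : ZMod (2 ^ n), 2 ^ n - a.val ≤ d → ∀ k : ℕ,
      op a ((k + 1 : ℕ) : ZMod (2 ^ n)) = 0 ∨ a.val < (op a ((k + 1 : ℕ) : ZMod (2 ^ n))).val := by
    intro d
    induction d with
    | zero =>
        intro a ha
        exact absurd ha (by have := ZMod.val_lt a; omega)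
    | succ d ih =>
        intro a ha k
        have base : ∀ c : ZMod (2 ^ n), a.val ≤ c.val → (op c 1 = 0 ∨ a.val < (op c 1).val) := by
          intro c hc
          rw [hs c]
          rcases eq_or_ne (c + 1) 0 with h0 | h0
          · exact Or.inl h0
          · right
            have hvc : c.val + 1 < 2 ^ n := by
              rcases Nat.lt_or_ge (c.val + 1) (2 ^ n) with h | h
              · exact h
              · exfalso
                have : c.val + 1 = 2 ^ n := by have := ZMod.val_lt c; omega
                apply h0
                calc c + 1 = ((c.val + 1 : ℕ) : ZMod (2 ^ n)) := by
                      rw [Nat.cast_add, ZMod.natCast_rightInverse c]; simp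
                  _ = ((2 ^ n : ℕ) : ZMod (2 ^ n)) := by rw [this]
                  _ = 0 := by simp
            have : (c + 1).val = c.val + 1 := by
              rw [show c + 1 = ((c.val + 1 : ℕ) : ZMod (2 ^ n)) by
                    rw [Nat.cast_add, ZMod.natCast_rightInverse c]; simp,
                  ZMod.val_cast_of_lt hvc]
            omega
        induction k with
        | zero =>
            have h1 : ((0 + 1 : ℕ) : ZMod (2 ^ n)) = 1 := by norm_num
            rw [h1]
            exact base a le_rfl
        | succ k ihk =>
            have hc : ((k + 1 + 1 : ℕ) : ZMod (2 ^ n)) = ((k + 1 : ℕ) : ZMod (2 ^ n)) + 1 := by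
              push_cast; ring
            rw [hc, lav_rec h2 h4 hs]
            set c := op a ((k + 1 : ℕ) : ZMod (2 ^ n)) with hcdef
            rcases ihk with h0 | hlt
            · rw [h0, lav_zero_mul h2 h4 hs]
              have := base a le_rfl
              rwa [hs a] at this
            · have hcne : c ≠ 0 := by
                intro h; rw [h] at hlt; simp [ZMod.val_zero] at hlt
              obtain ⟨m, hm⟩ := lav_exists_rep (a + 1)
              rw [hm]
              have hmeas : 2 ^ n - c.val ≤ d := by
                have := ZMod.val_lt c; omega
              rcases ih c hmeas m with h0 | hlt2
              · exact Or.inl h0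
              · exact Or.inr (lt_trans hlt hlt2)
  obtain ⟨k, rfl⟩ := lav_exists_rep b
  exact main (2 ^ n) a (Nat.sub_le _ _) k

include h2 h4 hs in
lemma lav_mul_zero (a : ZMod (2 ^ n)) : op a 0 = 0 := by
  have h00 : op (0 : ZMod (2 ^ n)) 0 = 0 := lav_zero_mul h2 h4 hs 0
  have hx : op a 0 = op (op a 0) (op a 0) := by
    conv_lhs => rw [← h00]
    exact lav_ld h2 h4 a 0 0
  rcases lav_gt h2 h4 hs (op a 0) (op a 0) with h | h
  · rw [hx, h]
  · rw [← hx] at h; omega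

include h2 h4 hs in
lemma lav_iter (a : ZMod (2 ^ n)) (k : ℕ) :
    op a ((k : ℕ) : ZMod (2 ^ n)) = (fun t => op t (a + 1))^[k] 0 := by
  induction k with
  | zero => simpa using lav_mul_zero h2 h4 hs a
  | succ k ih =>
      have hc : ((k + 1 : ℕ) : ZMod (2 ^ n)) = ((k : ℕ) : ZMod (2 ^ n)) + 1 := by push_cast; ring
      rw [hc, lav_rec h2 h4 hs, ih, Function.iterate_succ_apply']

include h2 h4 hs in
lemma lav_period (a x y : ZMod (2 ^ n)) (hy : op a y = 0) : op a (x + y) = op a x := by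
  have hx : x = ((x.val : ℕ) : ZMod (2 ^ n)) := (ZMod.natCast_rightInverse x).symm
  have hy' : y = ((y.val : ℕ) : ZMod (2 ^ n)) := (ZMod.natCast_rightInverse y).symm
  have hxy : x + y = ((x.val + y.val : ℕ) : ZMod (2 ^ n)) := by
    rw [Nat.cast_add, ← hx, ← hy']
  rw [hy', lav_iter h2 h4 hs] at hy
  rw [hxy, lav_iter h2 h4 hs, Function.iterate_add_apply, hy]
  conv_rhs => rw [hx]
  rw [lav_iter h2 h4 hs]

include h2 h4 hs in
lemma lav_nsmul (a : ZMod (2 ^ n)) (m : ℕ) (y : ZMod (2 ^ n)) (hy : op a y = 0) :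
    op a ((m : ZMod (2 ^ n)) * y) = 0 := by
  induction m with
  | zero => simpa using lav_mul_zero h2 h4 hs a
  | succ m ih =>
      have : ((m + 1 : ℕ) : ZMod (2 ^ n)) * y = (m : ZMod (2 ^ n)) * y + y := by push_cast; ring
      rw [this, lav_period h2 h4 hs a _ y hy, ih]

include h2 h4 hs in
lemma lav_unit_iff (a : ZMod (2 ^ n)) (u : (ZMod (2 ^ n))ˣ) (y : ZMod (2 ^ n)) :
    op a ((u : ZMod (2 ^ n)) * y) = 0 ↔ op a y = 0 := by
  constructor
  · intro h
    have := lav_nsmul h2 h4 hs a ((u⁻¹ : (ZMod (2 ^ n))ˣ) : ZMod (2 ^ n)).val _ h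
    rwa [ZMod.natCast_rightInverse, ← mul_assoc, Units.inv_mul, one_mul] at this
  · intro h
    have := lav_nsmul h2 h4 hs a ((u : ZMod (2 ^ n)) : ZMod (2 ^ n)).val y h
    rwa [ZMod.natCast_rightInverse] at this

end ops
end Laver


section Global

variable (op cmp : ∀ n : ℕ, ZMod (2 ^ n) → ZMod (2 ^ n) → ZMod (2 ^ n))
variable (hlaws : ∀ n, ALSigma (op n) (cmp n))
variable (hsucc : ∀ n, ∀ a : ZMod (2 ^ n), op n a 1 = a + 1)

include hlaws hsucc

lemma lav_cast_op (n : ℕ) (A B : ZMod (2 ^ (n + 1))) :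
    ZMod.castHom (pow_dvd_pow 2 (Nat.le_succ n)) (ZMod (2 ^ n)) (op (n + 1) A B)
      = op n (ZMod.castHom (pow_dvd_pow 2 (Nat.le_succ n)) (ZMod (2 ^ n)) A)
          (ZMod.castHom (pow_dvd_pow 2 (Nat.le_succ n)) (ZMod (2 ^ n)) B) := by
  set π := ZMod.castHom (pow_dvd_pow 2 (Nat.le_succ n)) (ZMod (2 ^ n)) with hπ
  obtain ⟨-, h2', -, h4'⟩ := hlaws (n + 1)
  obtain ⟨-, h2, -, h4⟩ := hlaws n
  have hs' := hsucc (n + 1)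
  have hs := hsucc n
  have main : ∀ d : ℕ, ∀ A : ZMod (2 ^ (n + 1)), 2 ^ (n + 1) - A.val ≤ d → ∀ k : ℕ,
      π (op (n + 1) A (k : ZMod (2 ^ (n + 1)))) = op n (π A) (k : ZMod (2 ^ n)) := by
    intro d
    induction d with
    | zero =>
        intro A hA
        exact absurd hA (by have := ZMod.val_lt A; omega)
    | succ d ih =>
        intro A hA k
        induction k with
        | zero =>
            rw [Nat.cast_zero, Nat.cast_zero, lav_mul_zero h2' h4' hs',
              lav_mul_zero h2 h4 hs, map_zero]
        | succ k ihk =>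
            have hc : ((k + 1 : ℕ) : ZMod (2 ^ (n + 1))) = ((k : ℕ) : ZMod (2 ^ (n + 1))) + 1 := by
              push_cast; ring
            have hcn : ((k + 1 : ℕ) : ZMod (2 ^ n)) = ((k : ℕ) : ZMod (2 ^ n)) + 1 := by
              push_cast; ring
            rw [hc, lav_rec h2' h4' hs', hcn, lav_rec h2 h4 hs, ← ihk]
            rcases lav_gt h2' h4' hs' A ((k : ℕ) : ZMod (2 ^ (n + 1))) with h0 | hlt
            · rw [h0, lav_zero_mul h2' h4' hs', map_zero, lav_zero_mul h2 h4 hs, map_add, map_one]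
            · obtain ⟨m, hm⟩ := lav_exists_rep (A + 1)
              have hmeas : 2 ^ (n + 1) - (op (n + 1) A ((k : ℕ) : ZMod (2 ^ (n + 1)))).val ≤ d := by
                have := ZMod.val_lt (op (n + 1) A ((k : ℕ) : ZMod (2 ^ (n + 1)))); omega
              rw [hm, ih _ hmeas (m + 1)]
              congr 1
              have : π (A + 1) = ((m + 1 : ℕ) : ZMod (2 ^ n)) := by rw [hm, map_natCast]
              rw [← this, map_add, map_one]
  obtain ⟨kb, rfl⟩ := lav_exists_rep B
  rw [map_natCast]
  exact main (2 ^ (n + 1)) A (Nat.sub_le _ _) (kb + 1)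

lemma lav_cast_cmp (n : ℕ) (A B : ZMod (2 ^ (n + 1))) :
    ZMod.castHom (pow_dvd_pow 2 (Nat.le_succ n)) (ZMod (2 ^ n)) (cmp (n + 1) A B)
      = cmp n (ZMod.castHom (pow_dvd_pow 2 (Nat.le_succ n)) (ZMod (2 ^ n)) A)
          (ZMod.castHom (pow_dvd_pow 2 (Nat.le_succ n)) (ZMod (2 ^ n)) B) := by
  obtain ⟨-, h2', -, -⟩ := hlaws (n + 1)
  obtain ⟨-, h2, -, -⟩ := hlaws n
  rw [lav_cmp_eq h2' (hsucc (n + 1)), lav_cmp_eq h2 (hsucc n), map_sub, map_one,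
    lav_cast_op op cmp hlaws hsucc n, map_add, map_one]

lemma lav_cast_eval (n : ℕ) (w : WP) :
    ZMod.castHom (pow_dvd_pow 2 (Nat.le_succ n)) (ZMod (2 ^ n)) (evalP op cmp (n + 1) w)
      = evalP op cmp n w := by
  induction w with
  | one => exact map_one _
  | mul x y ihx ihy => rw [evalP, evalP, lav_cast_op op cmp hlaws hsucc n, ihx, ihy]
  | comp x y ihx ihy => rw [evalP, evalP, lav_cast_cmp op cmp hlaws hsucc n, ihx, ihy]

lemma lav_eval_le {m n : ℕ} (h : m ≤ n) (w : WP) :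
    evalP op cmp m w = (((evalP op cmp n w).val : ℕ) : ZMod (2 ^ m)) := by
  induction n with
  | zero =>
      interval_cases m
      haveI : Subsingleton (ZMod (2 ^ 0)) := (pow_zero 2).symm ▸ inferInstanceAs (Subsingleton (ZMod 1))
      exact Subsingleton.elim _ _
  | succ n ih =>
      rcases h.lt_or_eq with hlt | rfl
      · have hmn : m ≤ n := Nat.lt_succ_iff.mp hlt
        rw [ih hmn, ← lav_cast_eval op cmp hlaws hsucc n w]
        set X := evalP op cmp (n + 1) w
        have hπX : (ZMod.castHom (pow_dvd_pow 2 (Nat.le_succ n)) (ZMod (2 ^ n)) X)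
            = ((X.val : ℕ) : ZMod (2 ^ n)) := by
          conv_lhs => rw [← ZMod.natCast_rightInverse X]
          rw [map_natCast]
        rw [hπX, ZMod.val_natCast]
        conv_rhs => rw [← Nat.mod_add_div X.val (2 ^ n)]
        rw [Nat.cast_add, Nat.cast_mul]
        have h0 : ((2 ^ n : ℕ) : ZMod (2 ^ m)) = 0 :=
          (ZMod.natCast_eq_zero_iff _ _).mpr (pow_dvd_pow 2 hmn)
        rw [h0, zero_mul, add_zero]
      · exact (ZMod.natCast_rightInverse _).symm



lemma lav_posWord (n k : ℕ) :
    evalP op cmp n (posWord (k + 1)) = ((k + 1 : ℕ) : ZMod (2 ^ n)) := by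
  induction k with
  | zero => simp [posWord, evalP]
  | succ k ih =>
      show evalP op cmp n (WP.mul (posWord (k + 1)) WP.one) = _
      rw [evalP, ih]
      show op n _ 1 = _
      rw [hsucc n]
      push_cast; ring

end Global

theorem stmt_17 (op cmp : ∀ n : ℕ, ZMod (2 ^ n) → ZMod (2 ^ n) → ZMod (2 ^ n))
    (hlaws : ∀ n, ALSigma (op n) (cmp n))
    (hsucc : ∀ n, ∀ a : ZMod (2 ^ n), op n a 1 = a + 1)
    (a b : WP) (hm : ∃ m : ℕ, evalP op cmp m b ≠ 0)
    (s : ℕ) (hs : IsSig op cmp b s) :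
    (∀ n : ℕ, evalP op cmp n (WP.mul a b) = 0 ↔
      evalP op cmp n (WP.mul a (posWord (2 ^ s))) = 0) ∧
    (∀ s₁ s₂ : ℕ, IsSig op cmp (WP.mul a b) s₁ →
      IsSig op cmp (WP.mul a (posWord (2 ^ s))) s₂ → s₁ = s₂) := by
  have main : ∀ n : ℕ, evalP op cmp n (WP.mul a b) = 0 ↔
      evalP op cmp n (WP.mul a (posWord (2 ^ s))) = 0 := by
    intro n
    obtain ⟨-, h2, -, h4⟩ := hlaws n
    have hsuccn := hsucc n
    have hts : (2 ^ s : ℕ) = (2 ^ s - 1) + 1 := by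
      have := Nat.one_le_two_pow (n := s); omega
    have ht : evalP op cmp n (posWord (2 ^ s)) = ((2 ^ s : ℕ) : ZMod (2 ^ n)) := by
      rw [hts]
      exact lav_posWord op cmp hlaws hsucc n _
    show op n (evalP op cmp n a) (evalP op cmp n b) = 0 ↔
        op n (evalP op cmp n a) (evalP op cmp n (posWord (2 ^ s))) = 0
    rw [ht]
    rcases le_or_gt n s with hns | hsn'
    · have hb0 : evalP op cmp n b = 0 := by
        rw [lav_eval_le op cmp hlaws hsucc hns b, hs.1]
        simp
      have ht0 : ((2 ^ s : ℕ) : ZMod (2 ^ n)) = 0 :=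
        (ZMod.natCast_eq_zero_iff _ _).mpr (pow_dvd_pow 2 hns)
      rw [hb0, ht0]
    · have hbv : evalP op cmp n b = (((evalP op cmp n b).val : ℕ) : ZMod (2 ^ n)) :=
        (ZMod.natCast_rightInverse _).symm
      set v := (evalP op cmp n b).val with hv
      have hdv : (2 : ℕ) ^ s ∣ v := by
        have h := lav_eval_le op cmp hlaws hsucc hsn'.le b
        rw [hs.1] at h
        exact (ZMod.natCast_eq_zero_iff _ _).mp h.symm
      have hnd : ¬ ((2 : ℕ) ^ (s + 1) ∣ v) := by
        intro hd
        have hle : s + 1 ≤ n := hsn'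
        have h := lav_eval_le op cmp hlaws hsucc hle b
        have h0 : evalP op cmp (s + 1) b = 0 := by
          rw [h]
          exact (ZMod.natCast_eq_zero_iff _ _).mpr hd
        have := hs.2 _ h0
        omega
      obtain ⟨w, hw⟩ := hdv
      have hodd : ¬ (2 ∣ w) := by
        rintro ⟨t, rfl⟩
        exact hnd ⟨t, by rw [hw]; ring⟩
      have hu : IsUnit ((w : ℕ) : ZMod (2 ^ n)) :=
        (ZMod.isUnit_iff_coprime w (2 ^ n)).mpr
          (Nat.Coprime.pow_right n
            (((Nat.Prime.coprime_iff_not_dvd Nat.prime_two).mpr hodd).symm))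
      have hb : evalP op cmp n b
          = ((w : ℕ) : ZMod (2 ^ n)) * ((2 ^ s : ℕ) : ZMod (2 ^ n)) := by
        rw [hbv, hw]
        push_cast; ring
      rw [hb, ← hu.unit_spec]
      exact lav_unit_iff h2 h4 hsuccn _ hu.unit _
  exact ⟨main, fun s₁ s₂ h₁ h₂ =>
    le_antisymm (h₂.2 s₁ ((main s₁).mp h₁.1)) (h₁.2 s₂ ((main s₂).mpr h₂.1))⟩
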